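/- In the symmetric group S_{n+1}, the number of boolean elements with support exactly {α_i, α_{i+1}, ..., α_{j}} (a set of consecutive simple roots with j ≥ i) is 2^{j-i}, i.e., the number of boolean elements of S_{n+1} whose support is a fixed interval of size k is 2^{k-1}. -/

import Mathlib

namespace Paper
open List

variable {W : Type*} [Group W]

/-- `ω` is a reduced word for `w`. -/
def IsReducedWord {B : Type*} {M : CoxeterMatrix B} (cs : CoxeterSystem M W)
    (w : W) (ω : List B) : Prop :=
  cs.wordProd ω = w ∧ ω.length = cs.length w

/-- The support of `w`. -/
def Supp {B : Type*} {M : CoxeterMatrix B} (cs : CoxeterSystem M W) (w : W) : Set B :=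
  {i | ∃ ω, IsReducedWord cs w ω ∧ i ∈ ω}

/-- `w` is a product of pairwise distinct simple reflections. -/
def IsBoolean {B : Type*} {M : CoxeterMatrix B} (cs : CoxeterSystem M W) (w : W) : Prop :=
  ∃ ω : List B, ω.Nodup ∧ cs.wordProd ω = w

/-- Bruhat order, characterized via the subword property. -/
def BruhatLE {B : Type*} {M : CoxeterMatrix B} (cs : CoxeterSystem M W) (u w : W) : Prop :=
  ∃ ω ω' : List B, IsReducedWord cs w ω ∧ ω'.Sublist ω ∧ cs.wordProd ω' = u

/-- `s` occurs (strictly) before `t` in the list `ω`. -/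
def PrecedesIn {B : Type*} (ω : List B) (s t : B) : Prop :=
  ∃ i j : Fin ω.length, (i : ℕ) < (j : ℕ) ∧ ω.get i = s ∧ ω.get j = t

section AuxProof
open Equiv List


/-- The adjacent transposition `(t, t+1)` on `ℕ`. -/
def nS (t : ℕ) : Equiv.Perm ℕ := Equiv.swap t (t+1)

/-- Product of adjacent transpositions along a word. -/
def nProd (l : List ℕ) : Equiv.Perm ℕ := (l.map nS).prod

@[simp] lemma nProd_nil : nProd [] = 1 := rfl

lemma nProd_cons (a : ℕ) (l : List ℕ) : nProd (a :: l) = nS a * nProd l := by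
  simp [nProd]

lemma nS_apply (t x : ℕ) : nS t x = if x = t then t + 1 else if x = t + 1 then t else x := by
  simp [nS, Equiv.swap_apply_def]

lemma nS_le_iff {t k : ℕ} (h : t ≠ k) (x : ℕ) : nS t x ≤ k ↔ x ≤ k := by
  rw [nS_apply]; split_ifs with h1 h2 <;> omega

lemma nProd_le_iff {l : List ℕ} {k : ℕ} (h : ∀ a ∈ l, a ≠ k) (x : ℕ) :
    nProd l x ≤ k ↔ x ≤ k := by
  induction l generalizing x with
  | nil => simp
  | cons a l ih =>
      rw [nProd_cons]
      have : (nS a * nProd l) x = nS a (nProd l x) := rfl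
      rw [this, nS_le_iff (h a (mem_cons_self (a := a) (l := l))), ih (fun b hb => h b (mem_cons_of_mem a hb))]

/-- The number of positions `q ∈ (k, n]` whose value under `σ` is `≤ k`. -/
def dst (n k : ℕ) (σ : Equiv.Perm ℕ) : ℕ :=
  ((Finset.Ioc k n).filter (fun q => σ q ≤ k)).card

/-- Total boundary-crossing statistic. -/
def Dst (n : ℕ) (σ : Equiv.Perm ℕ) : ℕ := ∑ k ∈ Finset.range n, dst n k σ

lemma dst_one (n k : ℕ) : dst n k 1 = 0 := by
  unfold dst
  rw [Finset.card_eq_zero, Finset.filter_eq_empty_iff]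
  intro q hq
  simp only [Finset.mem_Ioc] at hq
  simp only [Perm.one_apply]
  omega

lemma dst_mul_nS_of_ne {n k t : ℕ} (h : t ≠ k) (σ : Equiv.Perm ℕ) :
    dst n k (nS t * σ) = dst n k σ := by
  unfold dst
  congr 1
  apply Finset.filter_congr
  intro q _
  have : (nS t * σ) q = nS t (σ q) := rfl
  rw [this, nS_le_iff h]

lemma dst_mul_nS_le {n k : ℕ} (σ : Equiv.Perm ℕ) :
    dst n k (nS k * σ) ≤ dst n k σ + 1 := by
  have hsub : (Finset.Ioc k n).filter (fun q => (nS k * σ) q ≤ k) ⊆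
      insert (σ⁻¹ (k+1)) ((Finset.Ioc k n).filter (fun q => σ q ≤ k)) := by
    intro q hq
    simp only [Finset.mem_filter, Finset.mem_insert] at hq ⊢
    rcases hq with ⟨hq1, hq2⟩
    have : (nS k * σ) q = nS k (σ q) := rfl
    rw [this, nS_apply] at hq2
    split_ifs at hq2 with h1 h2
    · omega
    · left
      rw [← h2]
      exact (Equiv.symm_apply_apply σ q).symm
    · right; exact ⟨hq1, hq2⟩
  calc ((Finset.Ioc k n).filter (fun q => (nS k * σ) q ≤ k)).card
      ≤ (insert (σ⁻¹ (k+1)) ((Finset.Ioc k n).filter (fun q => σ q ≤ k))).card :=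
        Finset.card_le_card hsub
    _ ≤ dst n k σ + 1 := Finset.card_insert_le _ _

lemma dst_mul_nS_eq {n k : ℕ} (σ : Equiv.Perm ℕ) (hk : k < n)
    (hlow : ∀ x, σ x ≤ k ↔ x ≤ k) (hn : ∀ x, σ x ≤ n ↔ x ≤ n) :
    dst n k (nS k * σ) = dst n k σ + 1 := by
  have hp2 : σ (σ⁻¹ (k+1)) = k + 1 := Equiv.apply_symm_apply σ (k+1)
  have hp2gt : k < σ⁻¹ (k+1) := by
    by_contra h
    have : σ (σ⁻¹ (k+1)) ≤ k := (hlow _).mpr (by omega)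
    omega
  have hp2le : σ⁻¹ (k+1) ≤ n := by
    have : σ (σ⁻¹ (k+1)) ≤ n := by omega
    exact (hn _).mp this
  have hset : (Finset.Ioc k n).filter (fun q => (nS k * σ) q ≤ k) =
      insert (σ⁻¹ (k+1)) ((Finset.Ioc k n).filter (fun q => σ q ≤ k)) := by
    apply Finset.Subset.antisymm
    · intro q hq
      simp only [Finset.mem_filter, Finset.mem_insert] at hq ⊢
      rcases hq with ⟨hq1, hq2⟩
      have : (nS k * σ) q = nS k (σ q) := rfl
      rw [this, nS_apply] at hq2
      split_ifs at hq2 with h1 h2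
      · omega
      · left
        rw [← h2]
        exact (Equiv.symm_apply_apply σ q).symm
      · right; exact ⟨hq1, hq2⟩
    · intro q hq
      simp only [Finset.mem_filter, Finset.mem_insert] at hq ⊢
      have hmul : (nS k * σ) q = nS k (σ q) := rfl
      rcases hq with rfl | ⟨hq1, hq2⟩
      · refine ⟨Finset.mem_Ioc.mpr ⟨hp2gt, hp2le⟩, ?_⟩
        rw [hmul, hp2, nS_apply]
        split_ifs <;> omega
      · refine ⟨hq1, ?_⟩
        have hqk : σ q ≠ k := by
          intro h
          have : q ≤ k := (hlow q).mp (by omega)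
          have := Finset.mem_Ioc.mp hq1
          omega
        rw [hmul, nS_apply]
        split_ifs <;> omega
  rw [dst, hset, Finset.card_insert_of_notMem, dst]
  simp only [Finset.mem_filter, Finset.mem_Ioc]
  intro h
  omega

lemma Dst_step_le (n a : ℕ) (σ : Equiv.Perm ℕ) :
    Dst n (nS a * σ) ≤ Dst n σ + 1 := by
  by_cases ha : a < n
  · have hmem : a ∈ Finset.range n := Finset.mem_range.mpr ha
    have e1 : ∑ k ∈ (Finset.range n).erase a, dst n k (nS a * σ)
        = ∑ k ∈ (Finset.range n).erase a, dst n k σ :=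
      Finset.sum_congr rfl (fun k hk => dst_mul_nS_of_ne (Ne.symm (Finset.ne_of_mem_erase hk)) σ)
    rw [Dst, Dst, ← Finset.sum_erase_add _ _ hmem, ← Finset.sum_erase_add _ _ hmem, e1]
    have := dst_mul_nS_le (n := n) (k := a) σ
    omega
  · have e1 : ∑ k ∈ Finset.range n, dst n k (nS a * σ)
        = ∑ k ∈ Finset.range n, dst n k σ :=
      Finset.sum_congr rfl (fun k hk => dst_mul_nS_of_ne
        (by have := Finset.mem_range.mp hk; omega) σ)
    rw [Dst, Dst, e1]
    omega

lemma Dst_step_eq (n a : ℕ) (σ : Equiv.Perm ℕ) (ha : a < n)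
    (hstep : dst n a (nS a * σ) = dst n a σ + 1) :
    Dst n (nS a * σ) = Dst n σ + 1 := by
  have hmem : a ∈ Finset.range n := Finset.mem_range.mpr ha
  have e1 : ∑ k ∈ (Finset.range n).erase a, dst n k (nS a * σ)
      = ∑ k ∈ (Finset.range n).erase a, dst n k σ :=
    Finset.sum_congr rfl (fun k hk => dst_mul_nS_of_ne (Ne.symm (Finset.ne_of_mem_erase hk)) σ)
  rw [Dst, Dst, ← Finset.sum_erase_add _ _ hmem, ← Finset.sum_erase_add _ _ hmem, e1, hstep]
  omega

lemma dst_of_Dst_step (n a : ℕ) (σ : Equiv.Perm ℕ) (ha : a < n)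
    (h : Dst n (nS a * σ) = Dst n σ + 1) :
    dst n a (nS a * σ) = dst n a σ + 1 := by
  have hmem : a ∈ Finset.range n := Finset.mem_range.mpr ha
  have e1 : ∑ k ∈ (Finset.range n).erase a, dst n k (nS a * σ)
      = ∑ k ∈ (Finset.range n).erase a, dst n k σ :=
    Finset.sum_congr rfl (fun k hk => dst_mul_nS_of_ne (Ne.symm (Finset.ne_of_mem_erase hk)) σ)
  rw [Dst, Dst, ← Finset.sum_erase_add _ _ hmem, ← Finset.sum_erase_add _ _ hmem, e1] at h
  omega

lemma Dst_nProd_le (n : ℕ) (l : List ℕ) : Dst n (nProd l) ≤ l.length := by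
  induction l with
  | nil =>
      simp only [nProd_nil, length_nil, Nat.le_zero, Dst]
      rw [Finset.sum_eq_zero]
      intro k _
      exact dst_one n k
  | cons a l ih =>
      rw [nProd_cons]
      have := Dst_step_le n a (nProd l)
      simp only [length_cons]
      omega

lemma dst_eq_count {n : ℕ} : ∀ l : List ℕ, (∀ a ∈ l, a < n) → Dst n (nProd l) = l.length →
    ∀ k, dst n k (nProd l) = l.count k := by
  intro l
  induction l with
  | nil => intro _ _ k; simp [dst_one]
  | cons a l ih =>
      intro hlt hD k
      have ha : a < n := hlt a (mem_cons_self (a := a) (l := l))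
      rw [nProd_cons] at hD
      have h1 : Dst n (nS a * nProd l) ≤ Dst n (nProd l) + 1 := Dst_step_le n a (nProd l)
      have h2 : Dst n (nProd l) ≤ l.length := Dst_nProd_le n l
      simp only [length_cons] at hD
      have hDl : Dst n (nProd l) = l.length := by omega
      have hDstep : Dst n (nS a * nProd l) = Dst n (nProd l) + 1 := by omega
      have hcnt := ih (fun b hb => hlt b (mem_cons_of_mem a hb)) hDl
      rw [nProd_cons]
      by_cases hk : k = a
      · subst hk
        rw [dst_of_Dst_step n k (nProd l) ha hDstep, hcnt k, count_cons_self]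
      · rw [dst_mul_nS_of_ne (Ne.symm hk) (nProd l), hcnt k, count_cons_of_ne (Ne.symm hk)]

lemma Dst_nProd_nodup {n : ℕ} (l : List ℕ) (h : ∀ a ∈ l, a < n) (hnd : l.Nodup) :
    Dst n (nProd l) = l.length := by
  induction l with
  | nil =>
      simp only [nProd_nil, length_nil, Dst]
      rw [Finset.sum_eq_zero]
      intro k _
      exact dst_one n k
  | cons a l ih =>
      have ha : a < n := h a (mem_cons_self (a := a) (l := l))
      have hanl : a ∉ l := (nodup_cons.mp hnd).1
      have hlow : ∀ x, nProd l x ≤ a ↔ x ≤ a :=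
        nProd_le_iff (fun b hb => by rintro rfl; exact hanl hb)
      have hn : ∀ x, nProd l x ≤ n ↔ x ≤ n :=
        nProd_le_iff (fun b hb => by have := h b (mem_cons_of_mem a hb); omega)
      have hstep := dst_mul_nS_eq (nProd l) ha hlow hn
      rw [nProd_cons, Dst_step_eq n a (nProd l) ha hstep,
        ih (fun b hb => h b (mem_cons_of_mem a hb)) (nodup_cons.mp hnd).2]
      simp

/-! Trajectory lemmas for recovering relative order. -/

lemma nProd_inv_apply (l : List ℕ) (x : ℕ) :
    (nProd l)⁻¹ x = l.foldl (fun y a => nS a y) x := by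
  induction l generalizing x with
  | nil => simp
  | cons a l ih =>
      rw [nProd_cons, mul_inv_rev]
      have : ((nProd l)⁻¹ * (nS a)⁻¹) x = (nProd l)⁻¹ ((nS a)⁻¹ x) := rfl
      rw [this]
      have hinv : (nS a)⁻¹ = nS a := by
        rw [nS, Equiv.swap_inv]
      rw [hinv, foldl_cons, ih]

lemma foldl_le_of_ne {t : ℕ} : ∀ (l : List ℕ), (∀ a ∈ l, a ≠ t) → ∀ x, x ≤ t →
    l.foldl (fun y a => nS a y) x ≤ t := by
  intro l
  induction l with
  | nil => intro _ x hx; simpa using hx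
  | cons a l ih =>
      intro h x hx
      rw [foldl_cons]
      exact ih (fun b hb => h b (mem_cons_of_mem a hb))
        _ ((nS_le_iff (h a (mem_cons_self (a := a) (l := l))) x).mpr hx)

lemma foldl_gt_of_ne {t : ℕ} : ∀ (l : List ℕ), (∀ a ∈ l, a ≠ t) → ∀ x, t < x →
    t < l.foldl (fun y a => nS a y) x := by
  intro l
  induction l with
  | nil => intro _ x hx; simpa using hx
  | cons a l ih =>
      intro h x hx
      rw [foldl_cons]
      apply ih (fun b hb => h b (mem_cons_of_mem a hb))
      have := (nS_le_iff (h a (mem_cons_self (a := a) (l := l))) x)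
      omega

lemma foldl_stay {t : ℕ} (l : List ℕ) (h1 : ∀ a ∈ l, a ≠ t) (h2 : ∀ a ∈ l, a ≠ t + 1) :
    l.foldl (fun y a => nS a y) (t+1) = t + 1 := by
  have hle := foldl_le_of_ne l h2 (t+1) le_rfl
  have hgt := foldl_gt_of_ne l h1 (t+1) (by omega)
  omega

lemma nProd_inv_le_of_split {t : ℕ} (P S : List ℕ)
    (hP1 : ∀ a ∈ P, a ≠ t) (hP2 : ∀ a ∈ P, a ≠ t + 1) (hS : ∀ a ∈ S, a ≠ t) :
    (nProd (P ++ t :: S))⁻¹ (t+1) ≤ t := by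
  rw [nProd_inv_apply, foldl_append, foldl_stay P hP1 hP2, foldl_cons]
  have h1 : nS t (t+1) = t := by rw [nS_apply]; split_ifs <;> omega
  rw [h1]
  exact foldl_le_of_ne S hS t le_rfl

lemma nProd_inv_gt_of_split {t : ℕ} (P S : List ℕ)
    (hP1 : ∀ a ∈ P, a ≠ t) (hP2 : ∀ a ∈ P, a ≠ t + 1) (hS : ∀ a ∈ S, a ≠ t + 1) :
    t < (nProd (P ++ (t+1) :: S))⁻¹ (t+1) := by
  rw [nProd_inv_apply, foldl_append, foldl_stay P hP1 hP2, foldl_cons]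
  have h1 : nS (t+1) (t+1) = t + 2 := by rw [nS_apply]; split_ifs <;> omega
  rw [h1]
  have := foldl_gt_of_ne S hS (t+2) (by omega)
  omega

lemma swap3 {α : Type*} [DecidableEq α] {a b c : α} (hab : a ≠ b) (hbc : b ≠ c) (hac : a ≠ c) :
    (Equiv.swap a b * Equiv.swap b c) ^ 3 = 1 := by
  have ha : (Equiv.swap a b * Equiv.swap b c) a = b := by
    rw [Perm.mul_apply, Equiv.swap_apply_of_ne_of_ne hab hac, Equiv.swap_apply_left]
  have hb : (Equiv.swap a b * Equiv.swap b c) b = c := by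
    rw [Perm.mul_apply, Equiv.swap_apply_left, Equiv.swap_apply_of_ne_of_ne hac.symm hbc.symm]
  have hc : (Equiv.swap a b * Equiv.swap b c) c = a := by
    rw [Perm.mul_apply, Equiv.swap_apply_right, Equiv.swap_apply_right]
  have hx : ∀ x, x ≠ a → x ≠ b → x ≠ c → (Equiv.swap a b * Equiv.swap b c) x = x := by
    intro x h1 h2 h3
    rw [Perm.mul_apply, Equiv.swap_apply_of_ne_of_ne h2 h3, Equiv.swap_apply_of_ne_of_ne h1 h2]
  ext x
  have h3 : ((Equiv.swap a b * Equiv.swap b c) ^ 3) x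
      = (Equiv.swap a b * Equiv.swap b c) ((Equiv.swap a b * Equiv.swap b c)
        ((Equiv.swap a b * Equiv.swap b c) x)) := by
    rw [pow_succ, pow_succ, pow_one]; rfl
  rw [Perm.one_apply, h3]
  by_cases h1 : x = a
  · subst h1; rw [ha, hb, hc]
  · by_cases h2 : x = b
    · subst h2; rw [hb, hc, ha]
    · by_cases h3' : x = c
      · subst h3'; rw [hc, ha, hb]
      · rw [hx x h1 h2 h3', hx x h1 h2 h3', hx x h1 h2 h3']

lemma swap_disj_sq {a b c d : ℕ} (h1 : a ≠ c) (h2 : a ≠ d) (h3 : b ≠ c) (h4 : b ≠ d) :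
    (Equiv.swap a b * Equiv.swap c d) ^ 2 = 1 := by
  have hcomm : Equiv.swap a b * Equiv.swap c d = Equiv.swap c d * Equiv.swap a b := by
    ext x
    simp only [Perm.mul_apply, Equiv.swap_apply_def]
    split_ifs <;> omega
  have : (Equiv.swap a b * Equiv.swap c d) ^ 2
      = Equiv.swap a b * (Equiv.swap c d * Equiv.swap a b) * Equiv.swap c d := by
    rw [pow_two]; group
  rw [this, ← hcomm]
  rw [show Equiv.swap a b * (Equiv.swap a b * Equiv.swap c d) * Equiv.swap c d
      = (Equiv.swap a b * Equiv.swap a b) * (Equiv.swap c d * Equiv.swap c d) by group]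
  rw [Equiv.swap_mul_self, Equiv.swap_mul_self, one_mul]

lemma liftable (n : ℕ) :
    CoxeterMatrix.IsLiftable (CoxeterMatrix.Aₙ n) (fun k : Fin n => nS (k : ℕ)) := by
  intro k l
  have hM : (CoxeterMatrix.Aₙ n) k l
      = if k = l then 1 else (if (l : ℕ) + 1 = k ∨ (k : ℕ) + 1 = l then 3 else 2) := rfl
  rw [hM]
  show (nS (k : ℕ) * nS (l : ℕ)) ^
      (if k = l then 1 else if (l : ℕ) + 1 = k ∨ (k : ℕ) + 1 = l then 3 else 2) = 1
  have hval : k ≠ l → (k : ℕ) ≠ (l : ℕ) := fun h hh => h (Fin.ext hh)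
  split_ifs with h1 h2
  · subst h1; rw [pow_one, nS]; exact Equiv.swap_mul_self _ _
  · rcases h2 with h | h
    · have e1 : nS (k : ℕ) = Equiv.swap ((l : ℕ)+1) ((l : ℕ)+2) := by
        rw [nS, ← h]
      have e2 : nS (l : ℕ) = Equiv.swap ((l : ℕ)+1) (l : ℕ) := by
        rw [nS, Equiv.swap_comm]
      rw [e1, e2, Equiv.swap_comm ((l : ℕ)+1) ((l : ℕ)+2)]
      exact swap3 (by omega) (by omega) (by omega)
    · have e1 : nS (l : ℕ) = Equiv.swap ((k : ℕ)+1) ((k : ℕ)+2) := by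
        rw [nS, ← h]
      rw [e1, nS]
      exact swap3 (by omega) (by omega) (by omega)
  · have hkl : (k : ℕ) ≠ (l : ℕ) := hval h1
    push_neg at h2
    rw [nS, nS]
    exact swap_disj_sq (by omega) (by omega) (by omega) (by omega)

variable {W : Type*} [Group W] {n : ℕ} (cs : CoxeterSystem (CoxeterMatrix.Aₙ n) W)

/-- The permutation representation of the type-A Coxeter system. -/
def prep : W →* Equiv.Perm ℕ := cs.lift ⟨fun k : Fin n => nS (k : ℕ), liftable n⟩

lemma prep_simple (k : Fin n) : prep cs (cs.simple k) = nS (k : ℕ) :=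
  cs.lift_apply_simple (liftable n) k


lemma prep_wordProd (ω : List (Fin n)) :
    prep cs (cs.wordProd ω) = nProd (ω.map Fin.val) := by
  induction ω with
  | nil => simp [nProd]
  | cons a ω ih =>
      rw [cs.wordProd_cons, map_mul, prep_simple, map_cons, nProd_cons, ih]

lemma simple_comm (a b : Fin n) (h : (b : ℕ) + 1 < (a : ℕ)) :
    cs.simple a * cs.simple b = cs.simple b * cs.simple a := by
  have hM : (CoxeterMatrix.Aₙ n) a b
      = if a = b then 1 else (if (b : ℕ) + 1 = a ∨ (a : ℕ) + 1 = b then 3 else 2) := rfl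
  have h2 : (CoxeterMatrix.Aₙ n) a b = 2 := by
    rw [hM]
    have : a ≠ b := fun hh => by rw [hh] at h; omega
    rw [if_neg this, if_neg (by omega)]
  have hp := cs.simple_mul_simple_pow a b
  rw [h2, pow_two] at hp
  have : cs.simple a * cs.simple b = (cs.simple a * cs.simple b)⁻¹ := by
    exact eq_inv_of_mul_eq_one_left hp
  rw [this, mul_inv_rev, cs.inv_simple, cs.inv_simple]

lemma simple_comm_wordProd (a : Fin n) (S : List (Fin n)) (h : ∀ l ∈ S, (l : ℕ) + 1 < (a : ℕ)) :
    cs.simple a * cs.wordProd S = cs.wordProd S * cs.simple a := by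
  induction S with
  | nil => simp
  | cons b S ih =>
      rw [cs.wordProd_cons, ← mul_assoc, simple_comm cs a b (h b (mem_cons_self (a := b) (l := S))),
        mul_assoc, ih (fun l hl => h l (mem_cons_of_mem b hl)), mul_assoc]



/-! ### Canonical boolean words -/

/-- The canonical word with letters `i, ..., i+m` in which `t` precedes `t+1`
iff `f t = true`. -/
def bword (i : ℕ) : ℕ → (ℕ → Bool) → List ℕ
  | 0, _ => [i]
  | (m+1), f => cond (f (i+m)) (bword i m f ++ [i+m+1]) ((i+m+1) :: bword i m f)

lemma mem_bword (i : ℕ) : ∀ (m : ℕ) (f : ℕ → Bool) (l : ℕ),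
    l ∈ bword i m f ↔ (i ≤ l ∧ l ≤ i + m) := by
  intro m
  induction m with
  | zero =>
      intro f l
      rw [bword, mem_singleton]
      constructor
      · rintro rfl; omega
      · intro h; omega
  | succ m ih =>
      intro f l
      rw [bword]
      cases hf : f (i+m)
      · rw [cond_false, mem_cons, ih f l]
        constructor
        · rintro (rfl | h) <;> omega
        · intro h
          by_cases hl : l = i + m + 1
          · left; omega
          · right; omega
      · rw [cond_true, mem_append, ih f l, mem_singleton]
        constructor
        · rintro (h | rfl) <;> omega
        · intro h
          by_cases hl : l = i + m + 1
          · right; omega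
          · left; omega

lemma nodup_bword (i : ℕ) : ∀ (m : ℕ) (f : ℕ → Bool), (bword i m f).Nodup := by
  intro m
  induction m with
  | zero => intro f; rw [bword]; exact nodup_singleton i
  | succ m ih =>
      intro f
      rw [bword]
      cases hf : f (i+m)
      · rw [cond_false, nodup_cons]
        refine ⟨?_, ih f⟩
        rw [mem_bword]
        omega
      · rw [cond_true, nodup_append]
        refine ⟨ih f, nodup_singleton _, ?_⟩
        intro a ha b hb
        rw [mem_bword] at ha
        rw [mem_singleton] at hb
        omega

lemma bword_congr (i : ℕ) : ∀ (m : ℕ) (f f' : ℕ → Bool),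
    (∀ t, i ≤ t → t < i + m → f t = f' t) → bword i m f = bword i m f' := by
  intro m
  induction m with
  | zero => intro f f' _; rfl
  | succ m ih =>
      intro f f' h
      rw [bword, bword, h (i+m) (by omega) (by omega),
        ih f f' (fun t h1 h2 => h t h1 (by omega))]

lemma bword_split (i : ℕ) : ∀ (m : ℕ) (f : ℕ → Bool) (t : ℕ), i ≤ t → t < i + m →
    (f t = true → ∃ P S, bword i m f = P ++ t :: S ∧ t ∉ P ∧ t + 1 ∉ P ∧ t ∉ S) ∧
    (f t = false → ∃ P S, bword i m f = P ++ (t+1) :: S ∧ t ∉ P ∧ t + 1 ∉ P ∧ t + 1 ∉ S) := by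
  intro m
  induction m with
  | zero => intro f t h1 h2; omega
  | succ m ih =>
      intro f t h1 h2
      by_cases ht : t = i + m
      · subst ht
        constructor
        · intro hf
          rw [bword, hf, cond_true]
          have hmem : (i+m) ∈ bword i m f := (mem_bword i m f _).mpr ⟨h1, le_rfl⟩
          obtain ⟨P, S, hPS⟩ := append_of_mem hmem
          have hnd : (P ++ (i+m) :: S).Nodup := hPS ▸ nodup_bword i m f
          refine ⟨P, S ++ [i+m+1], by rw [hPS]; simp, ?_, ?_, ?_⟩
          · intro hm; exact (disjoint_of_nodup_append hnd) hm (mem_cons_self)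
          · intro hm
            have hmem2 : (i+m+1) ∈ bword i m f := by
              rw [hPS]; exact mem_append_left _ hm
            rw [mem_bword] at hmem2; omega
          · rw [mem_append, mem_singleton]
            rintro (hm | hm)
            · exact (nodup_cons.mp hnd.of_append_right).1 hm
            · omega
        · intro hf
          rw [bword, hf, cond_false]
          refine ⟨[], bword i m f, rfl, not_mem_nil, not_mem_nil, ?_⟩
          rw [mem_bword]; omega
      · obtain ⟨ih1, ih2⟩ := ih f t h1 (by omega)
        constructor
        · intro hf
          obtain ⟨P, S, hPS, c1, c2, c3⟩ := ih1 hf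
          rw [bword]
          cases hf2 : f (i+m)
          · rw [cond_false]
            refine ⟨(i+m+1) :: P, S, by rw [hPS]; rfl, ?_, ?_, c3⟩
            · rw [mem_cons]
              rintro (h | h)
              · omega
              · exact c1 h
            · rw [mem_cons]
              rintro (h | h)
              · omega
              · exact c2 h
          · rw [cond_true]
            refine ⟨P, S ++ [i+m+1], by rw [hPS]; simp, c1, c2, ?_⟩
            rw [mem_append, mem_singleton]
            rintro (h | h)
            · exact c3 h
            · omega
        · intro hf
          obtain ⟨P, S, hPS, c1, c2, c3⟩ := ih2 hf
          rw [bword]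
          cases hf2 : f (i+m)
          · rw [cond_false]
            refine ⟨(i+m+1) :: P, S, by rw [hPS]; rfl, ?_, ?_, c3⟩
            · rw [mem_cons]
              rintro (h | h)
              · omega
              · exact c1 h
            · rw [mem_cons]
              rintro (h | h)
              · omega
              · exact c2 h
          · rw [cond_true]
            refine ⟨P, S ++ [i+m+1], by rw [hPS]; simp, c1, c2, ?_⟩
            rw [mem_append, mem_singleton]
            rintro (h | h)
            · exact c3 h
            · omega

lemma bword_recover (i m : ℕ) (f : ℕ → Bool) (t : ℕ) (h1 : i ≤ t) (h2 : t < i + m) :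
    (f t = true) ↔ (nProd (bword i m f))⁻¹ (t+1) ≤ t := by
  constructor
  · intro hf
    obtain ⟨P, S, hPS, c1, c2, c3⟩ := (bword_split i m f t h1 h2).1 hf
    rw [hPS]
    exact nProd_inv_le_of_split P S (fun a ha e => c1 (by subst e; exact ha)) (fun a ha e => c2 (by subst e; exact ha))
      (fun a ha e => c3 (by subst e; exact ha))
  · intro hle
    by_contra hf
    have hf' : f t = false := by revert hf; cases f t <;> simp
    obtain ⟨P, S, hPS, c1, c2, c3⟩ := (bword_split i m f t h1 h2).2 hf'
    rw [hPS] at hle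
    have := nProd_inv_gt_of_split P S (fun a ha e => c1 (by subst e; exact ha)) (fun a ha e => c2 (by subst e; exact ha))
      (fun a ha e => c3 (by subst e; exact ha))
    omega


/-! ### Reducedness and support of nodup words -/

lemma nodup_length (ω : List (Fin n)) (hnd : ω.Nodup) :
    cs.length (cs.wordProd ω) = ω.length := by
  have hle := cs.length_wordProd_le ω
  obtain ⟨η, hlen, hprod⟩ := cs.exists_reduced_word (cs.wordProd ω)
  have hlt : ∀ a ∈ ω.map Fin.val, a < n := by
    intro a ha
    obtain ⟨x, _, rfl⟩ := mem_map.mp ha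
    exact x.isLt
  have hD : Dst n (nProd (ω.map Fin.val)) = ω.length := by
    have := Dst_nProd_nodup (n := n) (ω.map Fin.val) hlt (hnd.map Fin.val_injective)
    rwa [length_map] at this
  have heq : nProd (η.map Fin.val) = nProd (ω.map Fin.val) := by
    rw [← prep_wordProd cs η, ← prep_wordProd cs ω, ← hprod]
  have hDle : Dst n (nProd (η.map Fin.val)) ≤ η.length := by
    have := Dst_nProd_le n (η.map Fin.val)
    rwa [length_map] at this
  rw [heq, hD] at hDle
  have hlen : cs.length (cs.wordProd ω) = η.length := by rw [hprod]; exact hlen.eq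
  omega

lemma supp_nodup (ω : List (Fin n)) (hnd : ω.Nodup) :
    Supp cs (cs.wordProd ω) = {k | k ∈ ω} := by
  have hltω : ∀ a ∈ ω.map Fin.val, a < n := by
    intro a ha
    obtain ⟨x, _, rfl⟩ := mem_map.mp ha
    exact x.isLt
  have hDω : Dst n (nProd (ω.map Fin.val)) = (ω.map Fin.val).length := by
    exact Dst_nProd_nodup (n := n) (ω.map Fin.val) hltω (hnd.map Fin.val_injective)
  ext k
  simp only [Supp, Set.mem_setOf_eq]
  constructor
  · rintro ⟨η, ⟨hprod, hlen⟩, hk⟩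
    have hηlen : η.length = ω.length := by
      rw [hlen, nodup_length cs ω hnd]
    have hltη : ∀ a ∈ η.map Fin.val, a < n := by
      intro a ha
      obtain ⟨x, _, rfl⟩ := mem_map.mp ha
      exact x.isLt
    have heq : nProd (η.map Fin.val) = nProd (ω.map Fin.val) := by
      rw [← prep_wordProd cs η, ← prep_wordProd cs ω, hprod]
    have hDη : Dst n (nProd (η.map Fin.val)) = (η.map Fin.val).length := by
      rw [heq, hDω, length_map, length_map, hηlen]
    have hcη := dst_eq_count (n := n) (η.map Fin.val) hltη hDη (k : ℕ)
    have hcω := dst_eq_count (n := n) (ω.map Fin.val) hltω hDω (k : ℕ)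
    rw [heq] at hcη
    have hkη : (k : ℕ) ∈ η.map Fin.val := mem_map.mpr ⟨k, hk, rfl⟩
    have h1 : 0 < (η.map Fin.val).count (k : ℕ) := count_pos_iff.mpr hkη
    have h2 : 0 < (ω.map Fin.val).count (k : ℕ) := by omega
    obtain ⟨x, hx, hval⟩ := mem_map.mp (count_pos_iff.mp h2)
    rwa [Fin.val_injective hval] at hx
  · intro hk
    exact ⟨ω, ⟨rfl, (nodup_length cs ω hnd).symm⟩, hk⟩

/-! ### The main structural lemma -/

/-- Map a natural number to `Fin n`, with junk value `d`. -/
def toF (d : Fin n) (x : ℕ) : Fin n := if h : x < n then ⟨x, h⟩ else d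

lemma toF_val (d : Fin n) (x : ℕ) (h : x < n) : ((toF d x : Fin n) : ℕ) = x := by
  rw [toF, dif_pos h]

lemma map_val_toF (d : Fin n) : ∀ l : List ℕ, (∀ x ∈ l, x < n) →
    List.map Fin.val (List.map (toF d) l) = l := by
  intro l
  induction l with
  | nil => intro _; rfl
  | cons a l ih =>
      intro h
      rw [map_cons, map_cons, toF_val d a (h a (mem_cons_self (a := a) (l := l))),
        ih (fun x hx => h x (mem_cons_of_mem a hx))]

lemma main_lemma (i0 : Fin n) : ∀ (m : ℕ) (ω : List (Fin n)), ω.Nodup →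
    (i0 : ℕ) + m < n →
    (∀ l : Fin n, l ∈ ω ↔ ((i0 : ℕ) ≤ (l : ℕ) ∧ (l : ℕ) ≤ (i0 : ℕ) + m)) →
    ∃ f : ℕ → Bool, cs.wordProd ((bword i0 m f).map (toF i0)) = cs.wordProd ω := by
  intro m
  induction m with
  | zero =>
      intro ω hnd hlt hmem
      refine ⟨fun _ => true, ?_⟩
      have hi0 : i0 ∈ ω := (hmem i0).mpr (by omega)
      have hall : ∀ l ∈ ω, l = i0 := by
        intro l hl
        have := (hmem l).mp hl
        exact Fin.ext (by omega)
      have hω : ω = [i0] := by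
        cases ω with
        | nil => cases hi0
        | cons a tail =>
            have ha : a = i0 := hall a (mem_cons_self (a := a) (l := tail))
            subst ha
            cases tail with
            | nil => rfl
            | cons b tb =>
                have hb : b = a := hall b (by simp)
                exact absurd (hb ▸ mem_cons_self (a := b) (l := tb)) (nodup_cons.mp hnd).1
      rw [hω]
      congr 1
      rw [bword, map_cons, map_nil]
      congr 1
      rw [toF, dif_pos i0.isLt]
  | succ m ih =>
      intro ω hnd hlt hmem
      have hbn : (i0 : ℕ) + m + 1 < n := by omega
      set btop : Fin n := ⟨(i0 : ℕ) + m + 1, hbn⟩ with hbtop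
      have hbval : (btop : ℕ) = (i0 : ℕ) + m + 1 := rfl
      have hbmem : btop ∈ ω := (hmem btop).mpr (by rw [hbval]; omega)
      obtain ⟨P, S, hPS⟩ := append_of_mem hbmem
      have hndPS : (P ++ btop :: S).Nodup := hPS ▸ hnd
      have hdisj := disjoint_of_nodup_append hndPS
      have hbP : btop ∉ P := fun h => hdisj h (mem_cons_self)
      have hbS : btop ∉ S := (nodup_cons.mp hndPS.of_append_right).1
      have hndPS' : (P ++ S).Nodup :=
        hndPS.sublist ((sublist_cons_self btop S).append_left P)
      set csec : Fin n := ⟨(i0 : ℕ) + m, by omega⟩ with hcsec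
      have hcval : (csec : ℕ) = (i0 : ℕ) + m := rfl
      have hcmem : csec ∈ ω := (hmem csec).mpr (by rw [hcval]; omega)
      have hcb : csec ≠ btop := by
        intro e
        have := congrArg Fin.val e
        rw [hcval, hbval] at this
        omega
      have hcPS : csec ∈ P ∨ csec ∈ S := by
        have hx : csec ∈ P ++ btop :: S := hPS ▸ hcmem
        rcases mem_append.mp hx with h | h
        · exact Or.inl h
        · rcases mem_cons.mp h with h | h
          · exact absurd h hcb
          · exact Or.inr h
      have hmem' : ∀ l : Fin n, l ∈ P ++ S ↔ ((i0 : ℕ) ≤ (l : ℕ) ∧ (l : ℕ) ≤ (i0 : ℕ) + m) := by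
        intro l
        constructor
        · intro hl
          have hlω : l ∈ ω := by
            rw [hPS]
            rcases mem_append.mp hl with h | h
            · exact mem_append_left _ h
            · exact mem_append_right _ (mem_cons_of_mem _ h)
          have hlb : l ≠ btop := by
            rintro rfl
            rcases mem_append.mp hl with h | h
            · exact hbP h
            · exact hbS h
          have hb1 := (hmem l).mp hlω
          have hb2 : (l : ℕ) ≠ (i0 : ℕ) + m + 1 := by
            intro e
            exact hlb (Fin.ext (by rw [e, hbval]))
          omega
        · intro hb
          have hlω : l ∈ ω := (hmem l).mpr ⟨hb.1, by omega⟩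
          have hx : l ∈ P ++ btop :: S := hPS ▸ hlω
          rcases mem_append.mp hx with h | h
          · exact mem_append_left _ h
          · rcases mem_cons.mp h with h | h
            · exfalso
              have := congrArg Fin.val h
              rw [hbval] at this
              omega
            · exact mem_append_right _ h
      obtain ⟨f, hf⟩ := ih (P ++ S) hndPS' (by omega) hmem'
      rcases hcPS with hc | hc
      · -- csec ∈ P : `btop` occurs after `csec`, so put it at the end
        have hSsmall : ∀ l ∈ S, (l : ℕ) + 1 < (btop : ℕ) := by
          intro l hl
          have hlω : l ∈ ω := hPS ▸ mem_append_right _ (mem_cons_of_mem _ hl)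
          have h1 := (hmem l).mp hlω
          have h2 : l ≠ btop := fun e => hbS (e ▸ hl)
          have h3 : l ≠ csec := by
            intro e
            exact hdisj hc (mem_cons_of_mem _ (e ▸ hl))
          have hv2 : (l : ℕ) ≠ (i0 : ℕ) + m + 1 := fun e => h2 (Fin.ext (by rw [e, hbval]))
          have hv3 : (l : ℕ) ≠ (i0 : ℕ) + m := fun e => h3 (Fin.ext (by rw [e, hcval]))
          rw [hbval]
          omega
        have hcomm := simple_comm_wordProd cs btop S hSsmall
        refine ⟨fun t => if t = (i0 : ℕ) + m then true else f t, ?_⟩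
        have hbw : bword i0 (m+1) (fun t => if t = (i0 : ℕ) + m then true else f t)
            = bword i0 m f ++ [(i0 : ℕ) + m + 1] := by
          rw [bword]
          simp only [eq_self_iff_true, if_true, cond_true]
          rw [bword_congr i0 m _ f (fun t h1 h2 => if_neg (by omega))]
        have htop : toF i0 ((i0 : ℕ) + m + 1) = btop := by
          rw [toF, dif_pos hbn]
        calc cs.wordProd ((bword i0 (m+1) (fun t => if t = (i0 : ℕ) + m then true else f t)).map (toF i0))
            = cs.wordProd ((bword i0 m f).map (toF i0)) * cs.simple btop := by
              rw [hbw, map_append, cs.wordProd_append, map_cons, map_nil, htop,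
                cs.wordProd_singleton]
          _ = cs.wordProd (P ++ S) * cs.simple btop := by rw [hf]
          _ = cs.wordProd P * (cs.wordProd S * cs.simple btop) := by
              rw [cs.wordProd_append, mul_assoc]
          _ = cs.wordProd P * (cs.simple btop * cs.wordProd S) := by rw [hcomm]
          _ = cs.wordProd ω := by rw [hPS, cs.wordProd_append, cs.wordProd_cons]
      · -- csec ∈ S : `btop` occurs before `csec`, so put it at the front
        have hPsmall : ∀ l ∈ P, (l : ℕ) + 1 < (btop : ℕ) := by
          intro l hl
          have hlω : l ∈ ω := hPS ▸ mem_append_left _ hl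
          have h1 := (hmem l).mp hlω
          have h2 : l ≠ btop := fun e => hbP (e ▸ hl)
          have h3 : l ≠ csec := by
            intro e
            exact hdisj (e ▸ hl) (mem_cons_of_mem _ hc)
          have hv2 : (l : ℕ) ≠ (i0 : ℕ) + m + 1 := fun e => h2 (Fin.ext (by rw [e, hbval]))
          have hv3 : (l : ℕ) ≠ (i0 : ℕ) + m := fun e => h3 (Fin.ext (by rw [e, hcval]))
          rw [hbval]
          omega
        have hcomm := simple_comm_wordProd cs btop P hPsmall
        refine ⟨fun t => if t = (i0 : ℕ) + m then false else f t, ?_⟩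
        have hbw : bword i0 (m+1) (fun t => if t = (i0 : ℕ) + m then false else f t)
            = ((i0 : ℕ) + m + 1) :: bword i0 m f := by
          rw [bword]
          simp only [eq_self_iff_true, if_true, cond_false]
          rw [bword_congr i0 m _ f (fun t h1 h2 => if_neg (by omega))]
        have htop : toF i0 ((i0 : ℕ) + m + 1) = btop := by
          rw [toF, dif_pos hbn]
        calc cs.wordProd ((bword i0 (m+1) (fun t => if t = (i0 : ℕ) + m then false else f t)).map (toF i0))
            = cs.simple btop * cs.wordProd ((bword i0 m f).map (toF i0)) := by
              rw [hbw, map_cons, htop, cs.wordProd_cons]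
          _ = cs.simple btop * cs.wordProd (P ++ S) := by rw [hf]
          _ = cs.wordProd P * cs.simple btop * cs.wordProd S := by
              rw [cs.wordProd_append, ← mul_assoc, hcomm]
          _ = cs.wordProd ω := by rw [hPS, cs.wordProd_append, cs.wordProd_cons, mul_assoc]


/-! ### Counting -/

/-- Extend `g : Fin m → Bool` to `ℕ`, shifted to start at `i`. -/
def extFun (i m : ℕ) (g : Fin m → Bool) (t : ℕ) : Bool :=
  if h : i ≤ t ∧ t - i < m then g ⟨t - i, h.2⟩ else false

/-- The boolean element associated to a choice function `g`. -/
def ΦW (i : Fin n) (m : ℕ) (g : Fin m → Bool) : W :=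
  cs.wordProd ((bword i m (extFun i m g)).map (toF i))

theorem stmt17' (i j : Fin n) (hij : i ≤ j) :
    Set.ncard {w : W | IsBoolean cs w ∧ Supp cs w = Set.Icc i j} = 2 ^ ((j : ℕ) - (i : ℕ)) := by
  classical
  have hij' : (i : ℕ) ≤ (j : ℕ) := hij
  set m : ℕ := (j : ℕ) - (i : ℕ) with hm
  have him : (i : ℕ) + m = (j : ℕ) := by omega
  have hmn : (i : ℕ) + m < n := by have := j.isLt; omega
  have hword_mem : ∀ (f : ℕ → Bool) (l : Fin n),
      l ∈ (bword i m f).map (toF i) ↔ ((i : ℕ) ≤ (l : ℕ) ∧ (l : ℕ) ≤ (i : ℕ) + m) := by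
    intro f l
    rw [mem_map]
    constructor
    · rintro ⟨x, hx, rfl⟩
      rw [mem_bword] at hx
      rw [toF_val i x (by omega)]
      exact hx
    · intro hb
      refine ⟨(l : ℕ), (mem_bword _ _ _ _).mpr hb, ?_⟩
      rw [toF, dif_pos l.isLt]
  have hword_nodup : ∀ f : ℕ → Bool, ((bword i m f).map (toF i)).Nodup := by
    intro f
    refine (nodup_bword (i : ℕ) m f).map_on ?_
    intro x hx y hy hxy
    rw [mem_bword] at hx hy
    have hv := congrArg Fin.val hxy
    rw [toF_val i x (by omega), toF_val i y (by omega)] at hv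
    exact hv
  have hprep : ∀ f : ℕ → Bool,
      prep cs (cs.wordProd ((bword i m f).map (toF i))) = nProd (bword i m f) := by
    intro f
    rw [prep_wordProd, map_val_toF i _ (fun x hx => by rw [mem_bword] at hx; omega)]
  have hΦboolean : ∀ g : Fin m → Bool, IsBoolean cs (ΦW cs i m g) :=
    fun g => ⟨_, hword_nodup (extFun (i : ℕ) m g), rfl⟩
  have hΦsupp : ∀ g : Fin m → Bool, Supp cs (ΦW cs i m g) = Set.Icc i j := by
    intro g
    rw [ΦW, supp_nodup cs _ (hword_nodup (extFun (i : ℕ) m g))]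
    ext k
    simp only [Set.mem_setOf_eq, hword_mem, Set.mem_Icc, Fin.le_def]
    omega
  have hΦinj : Function.Injective (ΦW cs i m) := by
    intro g g' he
    have he' : cs.wordProd ((bword i m (extFun (i : ℕ) m g)).map (toF i))
        = cs.wordProd ((bword i m (extFun (i : ℕ) m g')).map (toF i)) := he
    have hp : nProd (bword i m (extFun (i : ℕ) m g))
        = nProd (bword i m (extFun (i : ℕ) m g')) :=
      (hprep _).symm.trans ((congrArg (prep cs) he').trans (hprep _))
    funext r
    have hrm : (r : ℕ) < m := r.isLt
    have e1 := bword_recover i m (extFun (i : ℕ) m g) ((i : ℕ) + r) (by omega) (by omega)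
    have e2 := bword_recover i m (extFun (i : ℕ) m g') ((i : ℕ) + r) (by omega) (by omega)
    rw [hp] at e1
    have hg : ∀ g0 : Fin m → Bool, extFun (i : ℕ) m g0 ((i : ℕ) + r) = g0 r := by
      intro g0
      have hcond : (i : ℕ) ≤ (i : ℕ) + (r : ℕ) ∧ (i : ℕ) + (r : ℕ) - (i : ℕ) < m :=
        ⟨by omega, by rw [Nat.add_sub_cancel_left]; exact hrm⟩
      rw [extFun, dif_pos hcond]
      congr 1
      exact Fin.ext (by simp)
    have hiff : (g r = true) ↔ (g' r = true) := by
      rw [← hg g, ← hg g']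
      exact e1.trans e2.symm
    cases hgr : g r <;> cases hgr' : g' r <;> simp_all
  have hΦsurj : ∀ w : W, IsBoolean cs w → Supp cs w = Set.Icc i j →
      ∃ g : Fin m → Bool, ΦW cs i m g = w := by
    rintro w ⟨ω, hnd, rfl⟩ hsupp
    rw [supp_nodup cs ω hnd] at hsupp
    have hωmem : ∀ l : Fin n, l ∈ ω ↔ ((i : ℕ) ≤ (l : ℕ) ∧ (l : ℕ) ≤ (i : ℕ) + m) := by
      intro l
      have hx := Set.ext_iff.mp hsupp l
      simp only [Set.mem_setOf_eq, Set.mem_Icc, Fin.le_def] at hx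
      rw [hx]
      omega
    obtain ⟨f, hf⟩ := main_lemma cs i m ω hnd hmn hωmem
    refine ⟨fun r => f ((i : ℕ) + r), ?_⟩
    rw [ΦW]
    have hbe : bword i m (extFun (i : ℕ) m (fun r : Fin m => f ((i : ℕ) + r))) = bword i m f := by
      apply bword_congr
      intro t h1t h2t
      rw [extFun, dif_pos ⟨h1t, by omega⟩]
      show f ((i : ℕ) + (t - (i : ℕ))) = f t
      rw [Nat.add_sub_cancel' h1t]
    rw [hbe, hf]
  have hset : {w : W | IsBoolean cs w ∧ Supp cs w = Set.Icc i j}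
      = ↑(Finset.image (ΦW cs i m) Finset.univ) := by
    ext w
    simp only [Set.mem_setOf_eq, Finset.coe_image, Finset.coe_univ, Set.image_univ,
      Set.mem_range]
    constructor
    · rintro ⟨h1, h2⟩
      exact hΦsurj w h1 h2
    · rintro ⟨g, rfl⟩
      exact ⟨hΦboolean g, hΦsupp g⟩
  rw [hset, Set.ncard_coe_finset, Finset.card_image_of_injective _ hΦinj,
    Finset.card_univ, Fintype.card_fun, Fintype.card_bool, Fintype.card_fin]


end AuxProof

/-- In type `Aₙ` (the symmetric group `S_{n+1}`), the number of boolean elements whose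
support is exactly the interval `{α_i, ..., α_j}` (with `i ≤ j`) is `2^(j-i)`. -/
theorem stmt17 (n : ℕ) (cs : CoxeterSystem (CoxeterMatrix.Aₙ n) W)
    (i j : Fin n) (hij : i ≤ j) :
    Set.ncard {w : W | IsBoolean cs w ∧ Supp cs w = Set.Icc i j} = 2 ^ ((j : ℕ) - (i : ℕ)) := by
  exact stmt17' cs i j hij

end Paper
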